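/- For every natural number k ≥ 1, the number of binary functional graphs of size 2k, i.e., the number of functions f : Fin (2k) → Fin (2k) such that every fiber f⁻¹(y) has cardinality 0 or 2, equals (2k)! · C(2k, k) / 2^k, where C(2k,k) is the central binomial coefficient. -/

import Mathlib

open scoped Classical

/-- A binary functional graph of size `n` is a function `f : Fin n → Fin n` such that every
fiber `f⁻¹(y)` has cardinality `0` or `2`. -/
def IsBinaryFunGraph {n : ℕ} (f : Fin n → Fin n) : Prop :=
  ∀ y, (Finset.univ.filter fun x => f x = y).card = 0 ∨
       (Finset.univ.filter fun x => f x = y).card = 2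

/- ### Auxiliary material -/

noncomputable def fiberwisePermEquiv (k : ℕ) :
    {τ : Equiv.Perm (Fin k × Fin 2) // Prod.fst ∘ ⇑τ = Prod.fst} ≃ (Fin k → Equiv.Perm (Fin 2)) where
  toFun τ y :=
    { toFun := fun x => (τ.1 (y, x)).2
      invFun := fun x => (τ.1⁻¹ (y, x)).2
      left_inv := by
        intro x
        have h1 : (τ.1 (y, x)).1 = y := congrFun τ.2 (y, x)
        have key : (y, (τ.1 (y, x)).2) = τ.1 (y, x) := Prod.ext h1.symm rfl
        show (τ.1⁻¹ (y, (τ.1 (y, x)).2)).2 = x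
        rw [key]; simp
      right_inv := by
        intro x
        have h2 : (τ.1⁻¹ (y, x)).1 = y := by
          have := congrFun τ.2 (τ.1⁻¹ (y, x)); simpa using this.symm
        have key : (y, (τ.1⁻¹ (y, x)).2) = τ.1⁻¹ (y, x) := Prod.ext h2.symm rfl
        show (τ.1 (y, (τ.1⁻¹ (y, x)).2)).2 = x
        rw [key]; simp }
  invFun g := ⟨Equiv.prodCongrRight g, by funext ⟨a, b⟩; simp⟩
  left_inv := by
    intro τ
    apply Subtype.ext
    apply Equiv.ext
    rintro ⟨a, b⟩
    simp only [Equiv.prodCongrRight_apply, Equiv.coe_fn_mk]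
    exact Prod.ext (congrFun τ.2 (a, b)).symm rfl
  right_inv := by
    intro g
    funext y
    ext x
    simp

theorem card_fiberwise_perm (k : ℕ) :
    Fintype.card {τ : Equiv.Perm (Fin k × Fin 2) // Prod.fst ∘ ⇑τ = Prod.fst} = 2 ^ k := by
  rw [Fintype.card_congr (fiberwisePermEquiv k)]
  simp [Fintype.card_perm]

noncomputable def pairEquiv (k : ℕ) : Fin (2 * k) ≃ Fin k × Fin 2 :=
  (finCongr (by ring)).trans finProdFinEquiv.symm

noncomputable def bfun (k : ℕ) : Fin (2 * k) → Fin k := fun x => (pairEquiv k x).1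

theorem bfun_fiber (k : ℕ) (y : Fin k) :
    (Finset.univ.filter fun x => bfun k x = y).card = 2 := by
  rw [← Fintype.card_subtype]
  have e1 : {x // bfun k x = y} ≃ {p : Fin k × Fin 2 // p.1 = y} :=
    (pairEquiv k).subtypeEquiv fun x => Iff.rfl
  have e2 : {p : Fin k × Fin 2 // p.1 = y} ≃ Fin 2 :=
    { toFun := fun p => p.1.2
      invFun := fun x => ⟨(y, x), rfl⟩
      left_inv := by rintro ⟨⟨a, b⟩, rfl⟩; rfl
      right_inv := fun x => rfl }
  rw [Fintype.card_congr (e1.trans e2)]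
  simp

theorem stab_card (k : ℕ) :
    Fintype.card {τ : Equiv.Perm (Fin (2 * k)) // bfun k ∘ ⇑τ = bfun k} = 2 ^ k := by
  have e : {τ : Equiv.Perm (Fin (2 * k)) // bfun k ∘ ⇑τ = bfun k} ≃
      {τ : Equiv.Perm (Fin k × Fin 2) // Prod.fst ∘ ⇑τ = Prod.fst} := by
    refine ((pairEquiv k).permCongr).subtypeEquiv fun τ => ⟨fun h => ?_, fun h => ?_⟩
    · funext p
      have := congrFun h ((pairEquiv k).symm p)
      simpa [bfun, Equiv.permCongr_apply] using this
    · funext x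
      have := congrFun h (pairEquiv k x)
      simpa [bfun, Equiv.permCongr_apply] using this
  rw [Fintype.card_congr e]
  exact card_fiberwise_perm k

abbrev Ftype (k : ℕ) := {f : Fin (2 * k) → Fin k //
  ∀ y, (Finset.univ.filter fun x => f x = y).card = 2}

theorem cardN (k : ℕ) :
    Fintype.card (Ftype k) * 2 ^ k = Nat.factorial (2 * k) := by
  classical
  have fibΦ : ∀ σ : Equiv.Perm (Fin (2 * k)), ∀ y,
      (Finset.univ.filter fun x => bfun k (σ x) = y).card = 2 := by
    intro σ y
    rw [← Fintype.card_subtype, Fintype.card_congr (σ.subtypeEquiv (q := fun z => bfun k z = y)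
      fun x => Iff.rfl), Fintype.card_subtype]
    exact bfun_fiber k y
  set Φ : Equiv.Perm (Fin (2 * k)) → Ftype k := fun σ => ⟨bfun k ∘ σ, fibΦ σ⟩ with hΦ
  have key : ∀ f : Ftype k, Fintype.card {σ // Φ σ = f} = 2 ^ k := by
    intro f
    have fe : ∀ y : Fin k, {x // f.1 x = y} ≃ {x // bfun k x = y} := fun y =>
      Fintype.equivOfCardEq (by
        rw [Fintype.card_subtype, Fintype.card_subtype, f.2 y, bfun_fiber k y])
    set σ₀ : Equiv.Perm (Fin (2 * k)) :=
      ((Equiv.sigmaFiberEquiv f.1).symm.trans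
        (Equiv.sigmaCongrRight fe)).trans (Equiv.sigmaFiberEquiv (bfun k)) with hσ₀
    have hb : ∀ x, bfun k (σ₀ x) = f.1 x := by
      intro x
      have : σ₀ x = (fe (f.1 x) ⟨x, rfl⟩).1 := rfl
      rw [this]
      exact (fe (f.1 x) ⟨x, rfl⟩).2
    have e : {τ : Equiv.Perm (Fin (2 * k)) // bfun k ∘ ⇑τ = bfun k} ≃ {σ // Φ σ = f} := by
      refine (Equiv.mulRight σ₀).subtypeEquiv fun τ => ⟨fun h => ?_, fun h => ?_⟩
      · apply Subtype.ext
        funext x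
        have h1 : bfun k (τ (σ₀ x)) = bfun k (σ₀ x) := congrFun h (σ₀ x)
        show bfun k (τ (σ₀ x)) = f.1 x
        rw [h1, hb]
      · funext z
        have h2 : bfun k (τ (σ₀ (σ₀.symm z))) = f.1 (σ₀.symm z) :=
          congrFun (congrArg Subtype.val h) (σ₀.symm z)
        rw [Equiv.apply_symm_apply] at h2
        show bfun k (τ z) = bfun k z
        rw [h2, ← hb (σ₀.symm z), Equiv.apply_symm_apply]
    rw [← Fintype.card_congr e]
    exact stab_card k
  have total : Nat.factorial (2 * k) = ∑ f : Ftype k, Fintype.card {σ // Φ σ = f} := by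
    have h1 : (2 * k).factorial = Fintype.card (Equiv.Perm (Fin (2 * k))) := by
      simp [Fintype.card_perm]
    rw [h1, Fintype.card_congr (Equiv.sigmaFiberEquiv Φ).symm, Fintype.card_sigma]
  rw [total]
  simp only [key]
  rw [Finset.sum_const, Finset.card_univ, smul_eq_mul]

abbrev BT (k : ℕ) := {f : Fin (2 * k) → Fin (2 * k) // IsBinaryFunGraph f}

noncomputable def Psi (k : ℕ) (f : BT k) : Finset (Fin (2 * k)) :=
  Finset.univ.filter fun y => (Finset.univ.filter fun x => f.1 x = y).card = 2

theorem Psi_card (k : ℕ) (f : BT k) : (Psi k f).card = k := by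
  have h1 : (Finset.univ : Finset (Fin (2 * k))).card
      = ∑ y : Fin (2 * k), (Finset.univ.filter fun x => f.1 x = y).card :=
    Finset.card_eq_sum_card_fiberwise (fun x _ => Finset.mem_univ (f.1 x))
  have h2 : ∑ y : Fin (2 * k), (Finset.univ.filter fun x => f.1 x = y).card
      = 2 * (Psi k f).card := by
    rw [← Finset.sum_filter_add_sum_filter_not Finset.univ
      (fun y => (Finset.univ.filter fun x => f.1 x = y).card = 2)]
    have hA : ∑ y ∈ Finset.univ.filter
        (fun y => (Finset.univ.filter fun x => f.1 x = y).card = 2),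
        (Finset.univ.filter fun x => f.1 x = y).card = 2 * (Psi k f).card := by
      rw [Finset.sum_congr rfl (fun y hy => (Finset.mem_filter.mp hy).2)]
      simp [Psi, mul_comm]
    have hB : ∑ y ∈ Finset.univ.filter
        (fun y => ¬(Finset.univ.filter fun x => f.1 x = y).card = 2),
        (Finset.univ.filter fun x => f.1 x = y).card = 0 := by
      refine Finset.sum_eq_zero fun y hy => ?_
      rcases f.2 y with h | h
      · exact h
      · exact absurd h (Finset.mem_filter.mp hy).2
    rw [hA, hB]
    omega
  have := h1.trans h2
  simp only [Finset.card_univ, Fintype.card_fin] at this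
  omega

theorem mem_S_of_psi (k : ℕ) (S : Finset (Fin (2 * k))) (p : {f : BT k // Psi k f = S})
    (x : Fin (2 * k)) : p.1.1 x ∈ S := by
  have hx : (Finset.univ.filter fun x' => p.1.1 x' = p.1.1 x).card = 2 := by
    rcases p.1.2 (p.1.1 x) with h | h
    · exfalso
      have : x ∈ Finset.univ.filter fun x' => p.1.1 x' = p.1.1 x := by simp
      rw [Finset.card_eq_zero.mp h] at this
      simp at this
    · exact h
  have : p.1.1 x ∈ Psi k p.1 := by simp [Psi, hx]
  rwa [p.2] at this

noncomputable def fiberEquiv (k : ℕ) (S : Finset (Fin (2 * k))) (hS : S.card = k) :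
    {f : BT k // Psi k f = S} ≃ Ftype k := by
  have eS : {x // x ∈ S} ≃ Fin k :=
    Fintype.equivFinOfCardEq (by rw [Fintype.card_coe, hS])
  have fwd_fib : ∀ (p : {f : BT k // Psi k f = S}) (y : Fin k),
      (Finset.univ.filter fun x => eS ⟨p.1.1 x, mem_S_of_psi k S p x⟩ = y).card = 2 := by
    intro p y
    have hmem : ((eS.symm y) : Fin (2 * k)) ∈ Psi k p.1 := by
      rw [p.2]; exact (eS.symm y).2
    have hc : (Finset.univ.filter fun x => p.1.1 x = ((eS.symm y) : Fin (2 * k))).card = 2 := by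
      simpa [Psi] using hmem
    have hset : (Finset.univ.filter fun x => eS ⟨p.1.1 x, mem_S_of_psi k S p x⟩ = y)
        = (Finset.univ.filter fun x => p.1.1 x = ((eS.symm y) : Fin (2 * k))) := by
      apply Finset.filter_congr
      intro x _
      constructor
      · intro h
        have h2 : (⟨p.1.1 x, mem_S_of_psi k S p x⟩ : {z // z ∈ S}) = eS.symm y := by
          rw [← h]; simp
        exact congrArg Subtype.val h2
      · intro h
        have h2 : (⟨p.1.1 x, mem_S_of_psi k S p x⟩ : {z // z ∈ S}) = eS.symm y :=
          Subtype.ext h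
        rw [h2]; simp
    rw [hset, hc]
  have bwd_fib : ∀ (g : Ftype k) (y : Fin (2 * k)) (hy : y ∈ S),
      (Finset.univ.filter fun x => ((eS.symm (g.1 x)) : Fin (2 * k)) = y).card = 2 := by
    intro g y hy
    have hset : (Finset.univ.filter fun x => ((eS.symm (g.1 x)) : Fin (2 * k)) = y)
        = (Finset.univ.filter fun x => g.1 x = eS ⟨y, hy⟩) := by
      apply Finset.filter_congr
      intro x _
      constructor
      · intro h
        have h2 : eS.symm (g.1 x) = ⟨y, hy⟩ := Subtype.ext h
        rw [← h2]; simp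
      · intro h
        rw [h]; simp
    rw [hset]
    exact g.2 _
  have bwd_fib0 : ∀ (g : Ftype k) (y : Fin (2 * k)), y ∉ S →
      (Finset.univ.filter fun x => ((eS.symm (g.1 x)) : Fin (2 * k)) = y).card = 0 := by
    intro g y hy
    rw [Finset.card_eq_zero]
    apply Finset.filter_eq_empty_iff.mpr
    intro x _ h
    exact hy (h ▸ (eS.symm (g.1 x)).2)
  refine
    { toFun := fun p => ⟨fun x => eS ⟨p.1.1 x, mem_S_of_psi k S p x⟩, fwd_fib p⟩
      invFun := fun g => ⟨⟨fun x => (eS.symm (g.1 x)).1, fun y => ?_⟩, ?_⟩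
      left_inv := ?_
      right_inv := ?_ }
  · by_cases hy : y ∈ S
    · exact Or.inr (bwd_fib g y hy)
    · exact Or.inl (bwd_fib0 g y hy)
  · ext y
    simp only [Psi, Finset.mem_filter, Finset.mem_univ, true_and]
    constructor
    · intro hc
      by_contra hy
      have := bwd_fib0 g y hy
      omega
    · intro hy
      exact bwd_fib g y hy
  · intro p
    apply Subtype.ext
    apply Subtype.ext
    funext x
    simp
  · intro g
    apply Subtype.ext
    funext x
    simp

/-- For every `k ≥ 1`, the number of binary functional graphs of size `2k`
equals `(2k)! · C(2k, k) / 2^k`. -/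
theorem stmt_4 (k : ℕ) (hk : 1 ≤ k) :
    Fintype.card {f : Fin (2 * k) → Fin (2 * k) // IsBinaryFunGraph f}
      = Nat.factorial (2 * k) * Nat.choose (2 * k) k / 2 ^ k := by
  classical
  have hT : Fintype.card (BT k)
      = ∑ S : Finset (Fin (2 * k)), Fintype.card {f : BT k // Psi k f = S} := by
    rw [Fintype.card_congr (Equiv.sigmaFiberEquiv (Psi k)).symm, Fintype.card_sigma]
  have hfib : ∀ S : Finset (Fin (2 * k)), Fintype.card {f : BT k // Psi k f = S}
      = if S.card = k then Fintype.card (Ftype k) else 0 := by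
    intro S
    by_cases h : S.card = k
    · rw [if_pos h]
      exact Fintype.card_congr (fiberEquiv k S h)
    · rw [if_neg h]
      rw [Fintype.card_eq_zero_iff]
      exact ⟨fun p => h (p.2 ▸ Psi_card k p.1)⟩
  have hsum : Fintype.card (BT k)
      = (Finset.univ.filter fun S : Finset (Fin (2 * k)) => S.card = k).card
          * Fintype.card (Ftype k) := by
    rw [hT]
    simp only [hfib]
    rw [← Finset.sum_filter, Finset.sum_const, smul_eq_mul]
  have hchoose : (Finset.univ.filter fun S : Finset (Fin (2 * k)) => S.card = k).card
      = Nat.choose (2 * k) k := by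
    rw [← Finset.powerset_univ, ← Finset.powersetCard_eq_filter,
      Finset.card_powersetCard, Finset.card_univ, Fintype.card_fin]
  have hN := cardN k
  have hmain : Fintype.card (BT k) = Nat.choose (2 * k) k * Fintype.card (Ftype k) := by
    rw [hsum, hchoose]
  rw [show Fintype.card {f : Fin (2 * k) → Fin (2 * k) // IsBinaryFunGraph f}
    = Fintype.card (BT k) from rfl, hmain, ← hN]
  rw [Nat.mul_comm (Fintype.card (Ftype k)) (2 ^ k)]
  rw [show 2 ^ k * Fintype.card (Ftype k) * Nat.choose (2 * k) k
    = Nat.choose (2 * k) k * Fintype.card (Ftype k) * 2 ^ k by ring]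
  rw [Nat.mul_div_cancel _ (pow_pos (by norm_num) k)]
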